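/- Every n-vertex graph with layered treewidth k has pathwidth at most 11√(kn) − 1. -/

import Mathlib

def IsTreeDecomp {V ι : Type} (G : SimpleGraph V) (T : SimpleGraph ι) (B : ι → Finset V) : Prop :=
  T.IsTree ∧
  (∀ ⦃v w⦄, G.Adj v w → ∃ x, v ∈ B x ∧ w ∈ B x) ∧
  (∀ v : V, (T.induce {x | v ∈ B x}).Connected)

noncomputable def treewidth {V : Type} (G : SimpleGraph V) : ℕ :=
  sInf {k | ∃ (ι : Type) (T : SimpleGraph ι) (B : ι → Finset V),
    IsTreeDecomp G T B ∧ ∀ x, (B x).card ≤ k + 1}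

noncomputable def pathwidth {V : Type} (G : SimpleGraph V) : ℕ :=
  sInf {k | ∃ (m : ℕ) (B : Fin m → Finset V),
    (∀ ⦃v w⦄, G.Adj v w → ∃ x, v ∈ B x ∧ w ∈ B x) ∧
    (∀ v : V, ∃ x, v ∈ B x) ∧
    (∀ (v : V) (x y z : Fin m), x ≤ y → y ≤ z → v ∈ B x → v ∈ B z → v ∈ B y) ∧
    ∀ x, (B x).card ≤ k + 1}

def IsLayering {V : Type} (G : SimpleGraph V) (L : V → ℕ) : Prop :=
  ∀ ⦃v w⦄, G.Adj v w → L v ≤ L w + 1 ∧ L w ≤ L v + 1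

noncomputable def layeredTreewidth {V : Type} (G : SimpleGraph V) : ℕ :=
  sInf {k | ∃ (ι : Type) (T : SimpleGraph ι) (B : ι → Finset V) (L : V → ℕ),
    IsTreeDecomp G T B ∧ IsLayering G L ∧
    ∀ x i, ((B x).filter (fun v => L v = i)).card ≤ k}

set_option linter.unusedSectionVars false
set_option maxHeartbeats 1000000

namespace PWaux
variable {V : Type} [DecidableEq V] (G : SimpleGraph V)

/-- adjacency within a finite set -/
def rel (A : Finset V) (a b : V) : Prop := a ∈ A ∧ b ∈ A ∧ G.Adj a b

/-- reachability within a finite set -/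
def RIn (A : Finset V) : V → V → Prop := Relation.ReflTransGen (rel G A)

variable {G}

lemma rel_symm {A : Finset V} : Symmetric (rel G A) := by
  rintro a b ⟨h1, h2, h3⟩; exact ⟨h2, h1, h3.symm⟩

lemma RIn.symm {A : Finset V} {a b : V} (h : RIn G A a b) : RIn G A b a := by
  induction h with
  | refl => exact Relation.ReflTransGen.refl
  | tail _ h2 ih => exact Relation.ReflTransGen.head (rel_symm h2) ih

lemma RIn.trans {A : Finset V} {a b c : V} (h : RIn G A a b) (h' : RIn G A b c) :
    RIn G A a c := Relation.ReflTransGen.trans h h'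

lemma RIn.refl {A : Finset V} {a : V} : RIn G A a a := Relation.ReflTransGen.refl

lemma RIn.mem_right {A : Finset V} {a b : V} (h : RIn G A a b) : a = b ∨ b ∈ A := by
  induction h with
  | refl => exact .inl rfl
  | tail _ h2 _ => exact .inr h2.2.1

open scoped Classical in
/-- connected component of `v` within `A` -/
noncomputable def compIn (A : Finset V) (v : V) : Finset V := A.filter (RIn G A v)

lemma mem_compIn {A : Finset V} {v w : V} : w ∈ compIn (G := G) A v ↔ w ∈ A ∧ RIn G A v w := by
  simp [compIn]

lemma compIn_subset {A : Finset V} {v : V} : compIn (G := G) A v ⊆ A := fun _ h =>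
  (mem_compIn.1 h).1

lemma self_mem_compIn {A : Finset V} {v : V} (hv : v ∈ A) : v ∈ compIn (G := G) A v :=
  mem_compIn.2 ⟨hv, RIn.refl⟩

/-- transfer a chain to a smaller ambient set, provided all reachable points lie in it -/
lemma RIn.transfer {A A' : Finset V} {v w : V} (h : RIn G A v w)
    (hall : ∀ z, RIn G A v z → z ∈ A') : RIn G A' v w := by
  induction h with
  | refl => exact RIn.refl
  | tail h1 h2 ih =>
      exact ih.tail ⟨hall _ h1, hall _ (h1.tail h2), h2.2.2⟩

lemma RIn.mono {A A' : Finset V} (hAA : A ⊆ A') {v w : V} (h : RIn G A v w) :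
    RIn G A' v w := by
  induction h with
  | refl => exact RIn.refl
  | tail _ h2 ih => exact ih.tail ⟨hAA h2.1, hAA h2.2.1, h2.2.2⟩

lemma compIn_eq_of_mem {A : Finset V} {v w : V} (h : w ∈ compIn (G := G) A v) :
    compIn (G := G) A v = compIn (G := G) A w := by
  obtain ⟨hwA, hvw⟩ := mem_compIn.1 h
  ext z
  simp only [mem_compIn]
  exact ⟨fun ⟨h1, h2⟩ => ⟨h1, hvw.symm.trans h2⟩, fun ⟨h1, h2⟩ => ⟨h1, hvw.trans h2⟩⟩

/-- components are disjoint or equal -/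
lemma compIn_disj {A : Finset V} {v w : V}
    (h : compIn (G := G) A v ≠ compIn (G := G) A w) :
    Disjoint (compIn (G := G) A v) (compIn (G := G) A w) := by
  rw [Finset.disjoint_left]
  intro z hz hz'
  exact h ((compIn_eq_of_mem hz).trans (compIn_eq_of_mem hz').symm)

/-- no edges leave a component inside A -/
lemma compIn_closed {A : Finset V} {v a b : V} (ha : a ∈ compIn (G := G) A v)
    (hb : b ∈ A) (hab : G.Adj a b) : b ∈ compIn (G := G) A v := by
  obtain ⟨h1, h2⟩ := mem_compIn.1 ha
  exact mem_compIn.2 ⟨hb, h2.tail ⟨h1, hb, hab⟩⟩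

/-! ### path decompositions as lists of bags -/

/-- `Deco G U l` : `l` is a path decomposition of the induced subgraph on `U`. -/
def Deco (G : SimpleGraph V) (U : Finset V) (l : List (Finset V)) : Prop :=
  (∀ b ∈ l, b ⊆ U) ∧
  (∀ v ∈ U, ∃ b ∈ l, v ∈ b) ∧
  (∀ ⦃v w⦄, v ∈ U → w ∈ U → G.Adj v w → ∃ b ∈ l, v ∈ b ∧ w ∈ b) ∧
  (∀ (v : V) (i j k : ℕ) (hi : i < l.length) (hj : j < l.length) (hk : k < l.length),
    i ≤ j → j ≤ k → v ∈ l[i] → v ∈ l[k] → v ∈ l[j])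

lemma deco_single (U : Finset V) : Deco G U [U] := by
  refine ⟨by simp, fun v hv => ⟨U, by simp, hv⟩, fun v w hv hw _ => ⟨U, by simp, hv, hw⟩, ?_⟩
  intro v i j k hi hj hk _ _ hvi _
  simp only [List.length_singleton] at hi hj hk
  have hj0 : j = 0 := by omega
  have hi0 : i = 0 := by omega
  subst hj0; subst hi0; exact hvi

lemma deco_append {A B : Finset V} {la lb : List (Finset V)}
    (hA : Deco G A la) (hB : Deco G B lb) (hdisj : Disjoint A B)
    (hnoedge : ∀ v w, v ∈ A → w ∈ B → ¬ G.Adj v w) :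
    Deco G (A ∪ B) (la ++ lb) := by
  obtain ⟨sA, mA, eA, iA⟩ := hA
  obtain ⟨sB, mB, eB, iB⟩ := hB
  refine ⟨?_, ?_, ?_, ?_⟩
  · intro b hb
    rcases List.mem_append.1 hb with h | h
    · exact (sA b h).trans Finset.subset_union_left
    · exact (sB b h).trans Finset.subset_union_right
  · intro v hv
    rcases Finset.mem_union.1 hv with h | h
    · obtain ⟨b, hb, hvb⟩ := mA v h; exact ⟨b, List.mem_append_left _ hb, hvb⟩
    · obtain ⟨b, hb, hvb⟩ := mB v h; exact ⟨b, List.mem_append_right _ hb, hvb⟩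
  · intro v w hv hw hadj
    rcases Finset.mem_union.1 hv with h | h <;> rcases Finset.mem_union.1 hw with h' | h'
    · obtain ⟨b, hb, hvb⟩ := eA h h' hadj; exact ⟨b, List.mem_append_left _ hb, hvb⟩
    · exact absurd hadj (hnoedge _ _ h h')
    · exact absurd hadj.symm (hnoedge _ _ h' h)
    · obtain ⟨b, hb, hvb⟩ := eB h h' hadj; exact ⟨b, List.mem_append_right _ hb, hvb⟩
  · intro v i j k hi hj hk hij hjk hvi hvk
    by_cases hvA : v ∈ A
    · -- all positions with v are < la.length
      have hposk : k < la.length := by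
        by_contra hge
        push_neg at hge
        have : (la ++ lb)[k] = lb[k - la.length]'(by
          have := hk; rw [List.length_append] at this; omega) := by
          rw [List.getElem_append_right hge]
        rw [this] at hvk
        have : v ∈ B := sB _ (by simp) hvk
        exact (Finset.disjoint_left.1 hdisj hvA) this
      have hposi : i < la.length := lt_of_le_of_lt hij (lt_of_le_of_lt hjk hposk)
      have hposj : j < la.length := lt_of_le_of_lt hjk hposk
      rw [List.getElem_append_left hposi] at hvi
      rw [List.getElem_append_left hposk] at hvk
      rw [List.getElem_append_left hposj]
      exact iA v i j k hposi hposj hposk hij hjk hvi hvk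
    · -- v ∉ A : v only in lb-bags
      have hposi : la.length ≤ i := by
        by_contra hlt
        push_neg at hlt
        rw [List.getElem_append_left hlt] at hvi
        exact hvA (sA _ (by simp) hvi)
      have hposj : la.length ≤ j := le_trans hposi hij
      have hposk : la.length ≤ k := le_trans hposj hjk
      have hi' : i - la.length < lb.length := by
        have := hi; rw [List.length_append] at this; omega
      have hj' : j - la.length < lb.length := by
        have := hj; rw [List.length_append] at this; omega
      have hk' : k - la.length < lb.length := by
        have := hk; rw [List.length_append] at this; omega
      rw [List.getElem_append_right hposi] at hvi
      rw [List.getElem_append_right hposk] at hvk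
      rw [List.getElem_append_right hposj]
      exact iB v _ _ _ hi' hj' hk' (by omega) (by omega) hvi hvk


/-- add a set `S` to every bag (and a bag `S` in front) -/
lemma deco_addSet {A : Finset V} {la : List (Finset V)} (S : Finset V)
    (hA : Deco G A la) (hSA : Disjoint S A) :
    Deco G (A ∪ S) (S :: la.map (· ∪ S)) := by
  obtain ⟨sA, mA, eA, iA⟩ := hA
  refine ⟨?_, ?_, ?_, ?_⟩
  · intro b hb
    rcases List.mem_cons.1 hb with rfl | hb
    · exact Finset.subset_union_right
    · obtain ⟨c, hc, rfl⟩ := List.mem_map.1 hb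
      exact Finset.union_subset ((sA c hc).trans Finset.subset_union_left)
        Finset.subset_union_right
  · intro v hv
    rcases Finset.mem_union.1 hv with h | h
    · obtain ⟨b, hb, hvb⟩ := mA v h
      exact ⟨b ∪ S, List.mem_cons_of_mem _ (List.mem_map_of_mem hb),
        Finset.mem_union_left _ hvb⟩
    · exact ⟨S, List.mem_cons_self, h⟩
  · intro v w hv hw hadj
    by_cases hvS : v ∈ S <;> by_cases hwS : w ∈ S
    · exact ⟨S, List.mem_cons_self, hvS, hwS⟩
    · have hwA : w ∈ A := (Finset.mem_union.1 hw).resolve_right hwS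
      obtain ⟨b, hb, hwb⟩ := mA w hwA
      exact ⟨b ∪ S, List.mem_cons_of_mem _ (List.mem_map_of_mem hb),
        Finset.mem_union_right _ hvS, Finset.mem_union_left _ hwb⟩
    · have hvA : v ∈ A := (Finset.mem_union.1 hv).resolve_right hvS
      obtain ⟨b, hb, hvb⟩ := mA v hvA
      exact ⟨b ∪ S, List.mem_cons_of_mem _ (List.mem_map_of_mem hb),
        Finset.mem_union_left _ hvb, Finset.mem_union_right _ hwS⟩
    · have hvA : v ∈ A := (Finset.mem_union.1 hv).resolve_right hvS
      have hwA : w ∈ A := (Finset.mem_union.1 hw).resolve_right hwS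
      obtain ⟨b, hb, hvb⟩ := eA hvA hwA hadj
      exact ⟨b ∪ S, List.mem_cons_of_mem _ (List.mem_map_of_mem hb),
        Finset.mem_union_left _ hvb.1, Finset.mem_union_left _ hvb.2⟩
  · intro v i j k hi hj hk hij hjk hvi hvk
    by_cases hvS : v ∈ S
    · -- v is in every bag
      match j, hj with
      | 0, _ => exact hvS
      | (j+1), hj =>
          simp only [List.length_cons, List.length_map] at hj
          have : (S :: la.map (· ∪ S))[j+1] = la[j]'(by omega) ∪ S := by
            simp
          rw [this]
          exact Finset.mem_union_right _ hvS
    · -- v not in S : not in bag 0, in mapped bags iff in original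
      match i, hi with
      | 0, _ => exact absurd hvi hvS
      | (i+1), hi =>
        match k, hk with
        | 0, _ => exact absurd hvk hvS
        | (k+1), hk =>
          match j, hj with
          | 0, _ => omega
          | (j+1), hj =>
            simp only [List.length_cons, List.length_map] at hi hj hk
            have gi : (S :: la.map (· ∪ S))[i+1] = la[i]'(by omega) ∪ S := by simp
            have gj : (S :: la.map (· ∪ S))[j+1] = la[j]'(by omega) ∪ S := by simp
            have gk : (S :: la.map (· ∪ S))[k+1] = la[k]'(by omega) ∪ S := by simp
            rw [gi] at hvi; rw [gk] at hvk; rw [gj]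
            have hvi' : v ∈ la[i]'(by omega) := (Finset.mem_union.1 hvi).resolve_right hvS
            have hvk' : v ∈ la[k]'(by omega) := (Finset.mem_union.1 hvk).resolve_right hvS
            exact Finset.mem_union_left _
              (iA v i j k (by omega) (by omega) (by omega) (by omega) (by omega) hvi' hvk')

/-- folding decompositions over a list of mutually separated sets -/
lemma deco_fold (c : ℝ) : ∀ CS : List (Finset V),
    CS.Pairwise (fun C D => Disjoint C D ∧ ∀ v w, v ∈ C → w ∈ D → ¬ G.Adj v w) →
    (∀ C ∈ CS, ∃ l, Deco G C l ∧ ∀ b ∈ l, ((b.card : ℝ) ≤ c)) →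
    ∃ l, Deco G (CS.foldr (· ∪ ·) ∅) l ∧ ∀ b ∈ l, ((b.card : ℝ) ≤ c) := by
  intro CS
  induction CS with
  | nil =>
      intro _ _
      refine ⟨[], ⟨by simp, by simp, by simp, ?_⟩, by simp⟩
      intro v i j k hi; simp at hi
  | cons C CS ih =>
      intro hpw hex
      obtain ⟨l, hl, hlc⟩ := hex C (List.mem_cons_self)
      obtain ⟨l', hl', hlc'⟩ := ih hpw.of_cons (fun D hD => hex D (List.mem_cons_of_mem _ hD))
      have hmemfold : ∀ (L : List (Finset V)) (v : V), v ∈ L.foldr (· ∪ ·) ∅ ↔ ∃ D ∈ L, v ∈ D := by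
        intro L
        induction L with
        | nil => simp
        | cons D L ihL => intro v; simp [ihL]
      refine ⟨l ++ l', ?_, ?_⟩
      · have := deco_append hl hl' ?_ ?_
        · simpa using this
        · rw [Finset.disjoint_left]
          intro a ha ha'
          obtain ⟨D, hD, haD⟩ := (hmemfold _ _).1 ha'
          exact Finset.disjoint_left.1 ((List.pairwise_cons.1 hpw).1 D hD).1 ha haD
        · intro v w hv hw hadj
          obtain ⟨D, hD, hwD⟩ := (hmemfold _ _).1 hw
          exact ((List.pairwise_cons.1 hpw).1 D hD).2 v w hv hwD hadj
      · intro b hb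
        rcases List.mem_append.1 hb with h | h
        · exact hlc b h
        · exact hlc' b h


lemma mem_foldr_union {L : List (Finset V)} {v : V} :
    v ∈ L.foldr (· ∪ ·) ∅ ↔ ∃ D ∈ L, v ∈ D := by
  induction L with
  | nil => simp
  | cons D L ihL => simp [ihL]

/-- build a decomposition of `A` from decompositions of all its components -/
lemma deco_of_components {A : Finset V} (c : ℝ)
    (hIH : ∀ v ∈ A, ∃ l, Deco G (compIn (G := G) A v) l ∧ ∀ b ∈ l, ((b.card : ℝ) ≤ c)) :
    ∃ l, Deco G A l ∧ ∀ b ∈ l, ((b.card : ℝ) ≤ c) := by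
  classical
  set CS := (A.image (compIn (G := G) A)).toList with hCS
  have hmemCS : ∀ C, C ∈ CS ↔ ∃ v ∈ A, compIn (G := G) A v = C := by
    intro C; rw [hCS, Finset.mem_toList, Finset.mem_image]
  have hpw : CS.Pairwise (fun C D => Disjoint C D ∧ ∀ v w, v ∈ C → w ∈ D → ¬ G.Adj v w) := by
    refine (Finset.nodup_toList _).pairwise_of_forall_ne ?_
    intro C hC D hD hne
    obtain ⟨v, hv, rfl⟩ := (hmemCS C).1 hC
    obtain ⟨w, hw, rfl⟩ := (hmemCS D).1 hD
    have hdisj := compIn_disj (G := G) hne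
    refine ⟨hdisj, ?_⟩
    intro a b ha hb hadj
    have : b ∈ compIn (G := G) A v := compIn_closed ha (compIn_subset hb) hadj
    exact Finset.disjoint_left.1 hdisj this hb
  have hex : ∀ C ∈ CS, ∃ l, Deco G C l ∧ ∀ b ∈ l, ((b.card : ℝ) ≤ c) := by
    intro C hC
    obtain ⟨v, hv, rfl⟩ := (hmemCS C).1 hC
    exact hIH v hv
  obtain ⟨l, hl, hlc⟩ := deco_fold c CS hpw hex
  · have hfold : CS.foldr (· ∪ ·) ∅ = A := by
      ext v
      rw [mem_foldr_union]
      constructor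
      · rintro ⟨D, hD, hvD⟩
        obtain ⟨w, _, rfl⟩ := (hmemCS D).1 hD
        exact compIn_subset hvD
      · intro hv
        exact ⟨compIn (G := G) A v, (hmemCS _).2 ⟨v, hv, rfl⟩, self_mem_compIn hv⟩
    rw [hfold] at hl
    exact ⟨l, hl, hlc⟩


/-! ### tree sides machinery -/

section Tree
variable {ι : Type} {T : SimpleGraph ι}

lemma not_reach_del {x y : ι} (hT : T.IsTree) (hadj : T.Adj x y) :
    ¬ (T.deleteEdges {s(x, y)}).Reachable x y := by
  have := (SimpleGraph.isAcyclic_iff_forall_adj_isBridge.1 hT.IsAcyclic) hadj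
  rw [SimpleGraph.isBridge_iff] at this
  exact this

lemma reach_del_or_aux {x y : ι} :
    ∀ {z w : ι} (_ : T.Walk z w),
      ((T.deleteEdges {s(x, y)}).Reachable w x ∨ (T.deleteEdges {s(x, y)}).Reachable w y) →
      ((T.deleteEdges {s(x, y)}).Reachable z x ∨ (T.deleteEdges {s(x, y)}).Reachable z y) := by
  intro z w p
  induction p with
  | nil => exact id
  | @cons a a2 c h q ih =>
      intro hc
      rcases ih hc with h1 | h1
      · by_cases he : s(a, a2) = s(x, y)
        · rw [Sym2.eq_iff] at he
          rcases he with ⟨rfl, rfl⟩ | ⟨rfl, rfl⟩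
          · exact .inl (SimpleGraph.Reachable.refl _)
          · exact .inr (SimpleGraph.Reachable.refl _)
        · have hadj2 : (T.deleteEdges {s(x, y)}).Adj a a2 := by
            rw [SimpleGraph.deleteEdges_adj]
            exact ⟨h, by simpa using he⟩
          exact .inl (hadj2.reachable.trans h1)
      · by_cases he : s(a, a2) = s(x, y)
        · rw [Sym2.eq_iff] at he
          rcases he with ⟨rfl, rfl⟩ | ⟨rfl, rfl⟩
          · exact .inl (SimpleGraph.Reachable.refl _)
          · exact .inr (SimpleGraph.Reachable.refl _)
        · have hadj2 : (T.deleteEdges {s(x, y)}).Adj a a2 := by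
            rw [SimpleGraph.deleteEdges_adj]
            exact ⟨h, by simpa using he⟩
          exact .inr (hadj2.reachable.trans h1)

lemma reach_del_or {x y : ι} (hT : T.IsTree) (_ : T.Adj x y) (z : ι) :
    (T.deleteEdges {s(x, y)}).Reachable z x ∨ (T.deleteEdges {s(x, y)}).Reachable z y := by
  obtain ⟨p⟩ := hT.isConnected.preconnected z x
  exact reach_del_or_aux p (.inl (SimpleGraph.Reachable.refl _))

lemma reach_del_of_walk_avoid {x y : ι} {s : Set ι} {a b : ι}
    (p : T.Walk a b) (hsup : ∀ c ∈ p.support, c ∈ s) (hx : x ∉ s) :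
    (T.deleteEdges {s(x, y)}).Reachable a b := by
  refine ⟨p.toDeleteEdges _ ?_⟩
  intro e he hes
  rw [Set.mem_singleton_iff] at hes
  subst hes
  exact hx (hsup x (SimpleGraph.Walk.fst_mem_support_of_mem_edges p he))

lemma cross_mem_support {x y : ι} (hT : T.IsTree) (hadj : T.Adj x y) :
    ∀ {a b : ι} (p : T.Walk a b),
    (T.deleteEdges {s(x, y)}).Reachable a x →
    (T.deleteEdges {s(x, y)}).Reachable b y →
    y ∈ p.support := by
  intro a b p
  induction p with
  | nil =>
      intro hax hby
      exact absurd (hax.symm.trans hby) (not_reach_del hT hadj)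
  | @cons a a2 c h q ih =>
      intro hax hby
      by_cases he : s(a, a2) = s(x, y)
      · rw [Sym2.eq_iff] at he
        rcases he with ⟨rfl, rfl⟩ | ⟨rfl, rfl⟩
        · exact List.mem_cons_of_mem _ (SimpleGraph.Walk.start_mem_support q)
        · exact List.mem_cons_self
      · have hadj2 : (T.deleteEdges {s(x, y)}).Adj a a2 := by
          rw [SimpleGraph.deleteEdges_adj]
          exact ⟨h, by simpa using he⟩
        exact List.mem_cons_of_mem _ (ih (hadj2.symm.reachable.trans hax) hby)

lemma not_reach_del_both {x y : ι} (hT : T.IsTree) (hadj : T.Adj x y) {z : ι}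
    (h1 : (T.deleteEdges {s(x, y)}).Reachable z x)
    (h2 : (T.deleteEdges {s(x, y)}).Reachable z y) : False :=
  not_reach_del hT hadj (h1.symm.trans h2)


lemma exists_walk_of_induce_connected {s : Set ι} {a b : ι} (ha : a ∈ s) (hb : b ∈ s)
    (h : (T.induce s).Connected) : ∃ p : T.Walk a b, ∀ c ∈ p.support, c ∈ s := by
  obtain ⟨p⟩ := h.preconnected ⟨a, ha⟩ ⟨b, hb⟩
  refine ⟨p.map (SimpleGraph.Embedding.induce s).toHom, ?_⟩
  intro c hc
  have hc : c ∈ (p.map (SimpleGraph.Embedding.induce s).toHom).support := hc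
  rw [SimpleGraph.Walk.support_map, List.mem_map] at hc
  obtain ⟨d, _, rfl⟩ := hc
  exact d.2

end Tree


/-! ### the centroid lemma -/

theorem centroid {ι : Type} {T : SimpleGraph ι} (hT : T.IsTree) (B : ι → Finset V)
    (W : Finset V)
    (hsub : ∀ x, B x ⊆ W)
    (hcov : ∀ ⦃v w⦄, v ∈ W → w ∈ W → G.Adj v w → ∃ x, v ∈ B x ∧ w ∈ B x)
    (hconn : ∀ v ∈ W, (T.induce {x | v ∈ B x}).Connected) :
    ∃ x0 : ι, ∀ v, 2 * (compIn (G := G) (W \ B x0) v).card ≤ W.card := by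
  classical
  by_contra hbad
  push_neg at hbad
  -- for each x, a component of W \ B x with more than half the vertices
  set A : ι → Finset V := fun x => W \ B x with hA
  have hbad' : ∀ x : ι, ∃ v, W.card < 2 * (compIn (G := G) (A x) v).card := by
    intro x; obtain ⟨v, hv⟩ := hbad x; exact ⟨v, by simp only [hA]; omega⟩
  set C : ι → Finset V := fun x => compIn (G := G) (A x) (Classical.choose (hbad' x)) with hC
  have hbig : ∀ x, W.card < 2 * (C x).card := fun x => Classical.choose_spec (hbad' x)
  have hCsub : ∀ x, C x ⊆ A x := fun x => compIn_subset
  have hCW : ∀ x, C x ⊆ W := fun x => (hCsub x).trans (Finset.sdiff_subset)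
  have hCne : ∀ x, (C x).Nonempty := by
    intro x
    rw [Finset.nonempty_iff_ne_empty]
    intro h
    have := hbig x
    rw [h] at this
    simp at this
  -- uniqueness of the big component
  have huniq : ∀ x v, W.card < 2 * (compIn (G := G) (A x) v).card →
      compIn (G := G) (A x) v = C x := by
    intro x v hv
    by_contra hne
    have hdisj := compIn_disj (G := G) hne
    have hsum : (compIn (G := G) (A x) v).card + (C x).card ≤ W.card := by
      rw [← Finset.card_union_of_disjoint hdisj]
      exact Finset.card_le_card (Finset.union_subset
        (compIn_subset.trans Finset.sdiff_subset) (hCW x))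
    have := hbig x
    omega
  -- distance to the nearest bag meeting C x
  set dSet : ι → Set ℕ := fun x => {n | ∃ z, (B z ∩ C x).Nonempty ∧ T.dist x z = n} with hdSet
  have hdne : ∀ x, (dSet x).Nonempty := by
    intro x
    obtain ⟨u, hu⟩ := hCne x
    have huW : u ∈ W := hCW x hu
    obtain ⟨⟨z, hz⟩⟩ := (hconn u huW).nonempty
    exact ⟨T.dist x z, z, ⟨u, Finset.mem_inter.2 ⟨hz, hu⟩⟩, rfl⟩
  set d : ι → ℕ := fun x => sInf (dSet x) with hd
  -- choose x with minimal (card (C x), d x) lexicographically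
  have hι : Nonempty ι := hT.isConnected.nonempty
  obtain ⟨x1⟩ := hι
  set a : ℕ := sInf {n | ∃ x, (C x).card = n} with ha
  have hamem : a ∈ {n | ∃ x, (C x).card = n} := Nat.sInf_mem ⟨(C x1).card, x1, rfl⟩
  have hamin : ∀ x, a ≤ (C x).card := fun x => Nat.sInf_le ⟨x, rfl⟩
  set P : Set ℕ := {n | ∃ x, (C x).card = a ∧ d x = n} with hP
  have hPne : P.Nonempty := by

    obtain ⟨x2, hx2⟩ := hamem
    exact ⟨d x2, x2, hx2, rfl⟩
  obtain ⟨x, hxa, hxd⟩ := Nat.sInf_mem hPne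
  have hddmin : ∀ x', (C x').card = a → sInf P ≤ d x' := by
    intro x' h'
    exact Nat.sInf_le ⟨x', h', rfl⟩
  -- basic facts about x and C x
  have hCxBx : ∀ v ∈ C x, v ∉ B x := by
    intro v hv
    have := hCsub x hv
    rw [hA] at this
    exact (Finset.mem_sdiff.1 this).2
  -- z0 : nearest bag meeting C x
  have hz0 := Nat.sInf_mem (hdne x)
  obtain ⟨z0, hz0C, hz0d⟩ := hz0
  have hdpos : 0 < d x := by
    rcases Nat.eq_zero_or_pos (d x) with h0 | h
    · exfalso
      rw [hd] at h0
      simp only at h0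
      rw [h0] at hz0d
      have hxz0 : x = z0 := by
        have hreach : T.Reachable x z0 := hT.isConnected.preconnected x z0
        exact ((hT.isConnected.dist_eq_zero_iff).1 hz0d)
      subst hxz0
      obtain ⟨u, hu⟩ := hz0C
      rw [Finset.mem_inter] at hu
      exact hCxBx u hu.2 hu.1
    · exact h
  -- walk from x to z0 of length d x; y := second vertex
  obtain ⟨p, hplen⟩ := (hT.isConnected.preconnected x z0).exists_walk_length_eq_dist
  rw [hz0d] at hplen
  cases p with
  | nil => rw [SimpleGraph.Walk.length_nil] at hplen; exact absurd hplen.symm hdpos.ne'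
  | @cons _ y _ hxy q =>
    rw [SimpleGraph.Walk.length_cons] at hplen
    have hqlen : q.length + 1 = d x := hplen
    have hxq : x ∉ q.support := by
      intro hx
      have h1 := SimpleGraph.dist_le (q.dropUntil x hx)
      have h2 := SimpleGraph.Walk.length_dropUntil_le q hx
      rw [hz0d] at h1
      omega
    have hz0side : (T.deleteEdges {s(x, y)}).Reachable z0 y := by
      refine (SimpleGraph.Walk.toDeleteEdges _ q ?_).reachable.symm
      intro e he hes
      rw [Set.mem_singleton_iff] at hes
      subst hes
      exact hxq (SimpleGraph.Walk.fst_mem_support_of_mem_edges q he)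
    -- all bags containing a fixed vertex lie on one side
    have hsubSide : ∀ v ∈ W, v ∉ B x → ∀ z z', v ∈ B z → v ∈ B z' →
        (T.deleteEdges {s(x, y)}).Reachable z y →
        (T.deleteEdges {s(x, y)}).Reachable z' y := by
      intro v hvW hvBx z z' hz hz' hzy
      obtain ⟨pw, hpw⟩ := exists_walk_of_induce_connected (s := {t | v ∈ B t}) hz' hz
        (hconn v hvW)
      exact (reach_del_of_walk_avoid pw hpw (by simpa using hvBx)).trans hzy
    obtain ⟨u0', hu0'⟩ := hz0C
    rw [Finset.mem_inter] at hu0'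
    obtain ⟨hu0'B, hu0'C⟩ := hu0'
    have hRIn_of_mem : ∀ u ∈ C x, RIn G (A x) u0' u := by
      intro u hu
      exact ((mem_compIn.1 hu0'C).2).symm.trans (mem_compIn.1 hu).2
    have hmemW : ∀ u ∈ C x, u ∈ W := fun u hu => hCW x hu
    -- every bag meeting C x lies on the y-side
    have haux : ∀ u, RIn G (A x) u0' u → ∀ z, u ∈ B z →
        (T.deleteEdges {s(x, y)}).Reachable z y := by
      intro u h1
      induction h1 with
      | refl =>
          intro z hz
          exact hsubSide u0' (hmemW u0' hu0'C) (hCxBx u0' hu0'C) z0 z hu0'B hz hz0side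
      | @tail b c hab hbc ih =>
          intro z hcz
          obtain ⟨hbA, hcA, hadjbc⟩ := hbc
          rw [hA] at hbA hcA
          simp only [Finset.mem_sdiff] at hbA hcA
          obtain ⟨q', hq'1, hq'2⟩ := hcov hbA.1 hcA.1 hadjbc
          exact hsubSide c hcA.1 hcA.2 q' z hq'2 hcz (ih q' hq'1)
    have hJside : ∀ z, (B z ∩ C x).Nonempty →
        (T.deleteEdges {s(x, y)}).Reachable z y := by
      intro z hz
      obtain ⟨u, hu⟩ := hz
      rw [Finset.mem_inter] at hu
      exact haux u (hRIn_of_mem u hu.2) z hu.1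
    -- a neighbour of C x outside B y stays in C x
    have hstay : ∀ w1 ∈ C x, ∀ w2, w2 ∈ W → w2 ∉ B y → G.Adj w1 w2 → w2 ∈ C x := by
      intro w1 hw1 w2 hw2W hw2By hadj
      by_cases hw2Bx : w2 ∈ B x
      · exfalso
        obtain ⟨q', hq1, hq2⟩ := hcov (hmemW w1 hw1) hw2W hadj
        have hq'y := hJside q' ⟨w1, Finset.mem_inter.2 ⟨hq1, hw1⟩⟩
        obtain ⟨pw, hpw⟩ := exists_walk_of_induce_connected (s := {t | w2 ∈ B t})
          hw2Bx hq2 (hconn w2 hw2W)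
        have hymem : y ∈ pw.support :=
          cross_mem_support hT hxy pw (SimpleGraph.Reachable.refl _) hq'y
        exact hw2By (hpw y hymem)
      · have hw2A : w2 ∈ A x := by rw [hA]; exact Finset.mem_sdiff.2 ⟨hw2W, hw2Bx⟩
        exact compIn_closed hw1 hw2A hadj
    -- the big component of y
    have hww : ∃ w, w ∈ C y ∩ C x := by
      by_contra hno
      push_neg at hno
      have hdisj : Disjoint (C y) (C x) := by
        rw [Finset.disjoint_left]
        intro z hz hz'
        exact hno z (Finset.mem_inter.2 ⟨hz, hz'⟩)
      have hsum : (C y).card + (C x).card ≤ W.card := by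
        rw [← Finset.card_union_of_disjoint hdisj]
        exact Finset.card_le_card (Finset.union_subset (hCW y) (hCW x))
      have h1 := hbig x
      have h2 := hbig y
      omega
    obtain ⟨w, hw⟩ := hww
    rw [Finset.mem_inter] at hw
    obtain ⟨hwCy, hwCx⟩ := hw
    -- chains in W \ B y starting in C x stay in C x
    have hchain : ∀ {a b : V}, RIn G (A y) a b → a ∈ C x → b ∈ C x := by
      intro aa bb h
      induction h with
      | refl => exact id
      | @tail b c hab hbc ih =>
          intro haC
          obtain ⟨hbA, hcA, hadjbc⟩ := hbc
          rw [hA] at hcA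
          simp only [Finset.mem_sdiff] at hcA
          exact hstay b (ih haC) c hcA.1 hcA.2 hadjbc
    have hCyCx : C y ⊆ C x := by
      intro w' hw'
      have h1 : RIn G (A y) w w' :=
        ((mem_compIn.1 hwCy).2).symm.trans (mem_compIn.1 hw').2
      exact hchain h1 hwCx
    by_cases hByCx : (B y ∩ C x).Nonempty
    · -- strict decrease of the big component: contradiction with minimality of a
      obtain ⟨cb, hcb⟩ := hByCx
      rw [Finset.mem_inter] at hcb
      have hcbCy : cb ∉ C y := by
        intro h
        have := (hCsub y) h
        rw [hA] at this
        exact (Finset.mem_sdiff.1 this).2 hcb.1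
      have hss : C y ⊂ C x := hCyCx.ssubset_of_ne (by
        intro h
        rw [h] at hcbCy
        exact hcbCy hcb.2)
      have := Finset.card_lt_card hss
      have := hamin y
      omega
    · -- equal components: contradiction with minimality of d x
      have hCxCy : C x ⊆ C y := by
        intro c hc
        have h1 : RIn G (A x) w c :=
          ((mem_compIn.1 hwCx).2).symm.trans (mem_compIn.1 hc).2
        have hCxw : compIn (G := G) (A x) w = C x := (compIn_eq_of_mem hwCx).symm
        have h2 : RIn G (A y) w c := by
          refine h1.transfer ?_
          intro z hz
          have hzC : z ∈ C x := by
            rcases hz.mem_right with rfl | hzA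
            · exact hwCx
            · rw [← hCxw]; exact mem_compIn.2 ⟨hzA, hz⟩
          have hzW : z ∈ W := hmemW z hzC
          have hzBy : z ∉ B y := by
            intro h
            exact hByCx ⟨z, Finset.mem_inter.2 ⟨h, hzC⟩⟩
          rw [hA]
          exact Finset.mem_sdiff.2 ⟨hzW, hzBy⟩
        have hCyw : compIn (G := G) (A y) w = C y := (compIn_eq_of_mem hwCy).symm
        rw [← hCyw]
        exact mem_compIn.2 ⟨by
          rcases h2.mem_right with rfl | hcA
          · exact (hCsub y) hwCy
          · exact hcA, h2⟩
      have hCeq : C y = C x := le_antisymm hCyCx hCxCy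
      have hcard : (C y).card = a := by rw [hCeq]; exact hxa
      have hdy : d y ≤ q.length := by
        refine le_trans (Nat.sInf_le ⟨z0, ?_, rfl⟩) (SimpleGraph.dist_le q)
        rw [hCeq]
        exact ⟨u0', Finset.mem_inter.2 ⟨hu0'B, hu0'C⟩⟩
      have h1 := hddmin y hcard
      rw [← hxd] at h1
      omega


/-! ### band arithmetic -/

lemma mul_cancel_small {p t q x : ℕ} (h : p * t = p * q + x) (hx : x < p) : x = 0 := by
  rcases le_or_gt t q with h3 | h3
  · have := Nat.mul_le_mul_left p h3
    omega
  · have h4 : q + 1 ≤ t := h3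
    have h5 := Nat.mul_le_mul_left p h4
    have h6 : p * (q + 1) = p * q + p := by ring
    omega

lemma band_succ {p r0 : ℕ} (hp : 0 < p) (hr : r0 < p) {l : ℕ} (hl : l % p ≠ r0) :
    (l + 1 + (p - 1 - r0)) / p = (l + (p - 1 - r0)) / p := by
  have hdm := Nat.div_add_mod l p
  have hm : l % p < p := Nat.mod_lt _ hp
  set q := l / p with hq
  set a := l % p with haa
  have key : ¬ p ∣ (l + (p - 1 - r0) + 1) := by
    rintro ⟨t, ht⟩
    rcases le_or_gt r0 a with h | h
    · have h1 : p * t = p * (q + 1) + (a - r0) := by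
        have : p * (q + 1) = p * q + p := by ring
        omega
      have := mul_cancel_small h1 (by omega)
      omega
    · have h1 : p * t = p * q + (p - (r0 - a)) := by omega
      have := mul_cancel_small h1 (by omega)
      omega
  rw [show l + 1 + (p - 1 - r0) = (l + (p - 1 - r0)) + 1 by omega]
  rw [Nat.succ_div, if_neg key, add_zero]

/-! ### the separator lemma -/

theorem separator {ι : Type} {T : SimpleGraph ι} {B : ι → Finset V} {L : V → ℕ} {k : ℕ}
    (hT : T.IsTree)
    (hcov : ∀ ⦃v w⦄, G.Adj v w → ∃ x, v ∈ B x ∧ w ∈ B x)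
    (hconn : ∀ v : V, (T.induce {x | v ∈ B x}).Connected)
    (hlay : ∀ ⦃v w⦄, G.Adj v w → L v ≤ L w + 1 ∧ L w ≤ L v + 1)
    (hk : ∀ x i, ((B x).filter (fun v => L v = i)).card ≤ k)
    (U : Finset V) {p : ℕ} (hp : 0 < p) :
    ∃ S : Finset V, S ⊆ U ∧ S.card ≤ U.card / p + k * p ∧
      ∀ v, 2 * (compIn (G := G) (U \ S) v).card ≤ U.card := by
  classical
  set u := U.card with hu
  -- choose the sparsest residue class
  obtain ⟨r0, hr0mem, hr0min⟩ := Finset.exists_min_image (Finset.range p)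
    (fun r => (U.filter (fun v => L v % p = r)).card) ⟨0, Finset.mem_range.2 hp⟩
  rw [Finset.mem_range] at hr0mem
  set S₀ : Finset V := U.filter (fun v => L v % p = r0) with hS₀
  have hsum : ∑ r ∈ Finset.range p, (U.filter (fun v => L v % p = r)).card = u := by
    rw [hu]
    exact (Finset.card_eq_sum_card_fiberwise (fun v hv => Finset.mem_range.2
      (Nat.mod_lt _ hp))).symm
  have hS₀card : S₀.card ≤ u / p := by
    rw [Nat.le_div_iff_mul_le hp]
    calc S₀.card * p = ∑ _r ∈ Finset.range p, S₀.card := by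
          rw [Finset.sum_const, Finset.card_range]; ring
      _ ≤ ∑ r ∈ Finset.range p, (U.filter (fun v => L v % p = r)).card := by
          exact Finset.sum_le_sum (fun r hr => hr0min r hr)
      _ = u := hsum
  set c : ℕ := p - 1 - r0 with hc
  set band : V → ℕ := fun v => (L v + c) / p with hband
  -- edges inside U \ S₀ do not change the band
  have hbandstep : ∀ v w, v ∈ U \ S₀ → w ∈ U \ S₀ → G.Adj v w → band v = band w := by
    intro v w hv hw hadj
    rw [Finset.mem_sdiff, hS₀, Finset.mem_filter] at hv hw
    have hv2 : L v % p ≠ r0 := fun h => hv.2 ⟨hv.1, h⟩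
    have hw2 : L w % p ≠ r0 := fun h => hw.2 ⟨hw.1, h⟩
    obtain ⟨h1, h2⟩ := hlay hadj
    rcases Nat.lt_trichotomy (L v) (L w) with h | h | h
    · have : L w = L v + 1 := by omega
      rw [hband]; simp only
      rw [this]
      exact (band_succ hp hr0mem hv2).symm
    · rw [hband]; simp only [h]
    · have : L v = L w + 1 := by omega
      rw [hband]; simp only
      rw [this]
      exact band_succ hp hr0mem hw2
  -- components of  U \ S₀ live inside a single band
  have hcompband : ∀ (S' : Finset V) (hS' : S₀ ⊆ S') (v z : V),
      RIn G (U \ S') v z → band z = band v := by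
    intro S' hS' v z h
    induction h with
    | refl => rfl
    | @tail b cc hab hbc ih =>
        rw [← ih]
        have hb : b ∈ U \ S₀ := by
          have := hbc.1
          rw [Finset.mem_sdiff] at this ⊢
          exact ⟨this.1, fun hh => this.2 (hS' hh)⟩
        have hcc : cc ∈ U \ S₀ := by
          have := hbc.2.1
          rw [Finset.mem_sdiff] at this ⊢
          exact ⟨this.1, fun hh => this.2 (hS' hh)⟩
        exact (hbandstep b cc hb hcc hbc.2.2).symm
  -- the bags have at most k * p vertices in each band
  have hbagband : ∀ (x : ι) (j : ℕ) (F : Finset V), F ⊆ (B x).filter (fun v => band v = j) →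
      F.card ≤ k * p := by
    intro x j F hF
    set I : Finset ℕ := Finset.Ico (j * p + r0 + 1 - p) (j * p + r0 + 1) with hI
    have hmemI : ∀ v ∈ F, L v ∈ I := by
      intro v hv
      have := hF hv
      rw [Finset.mem_filter] at this
      have hb : (L v + c) / p = j := this.2
      have hdm := Nat.div_add_mod (L v + c) p
      have hm : (L v + c) % p < p := Nat.mod_lt _ hp
      rw [hb] at hdm
      rw [hI, Finset.mem_Ico]
      have hpj : p * j = j * p := by ring
      omega
    calc F.card = ∑ l ∈ I, (F.filter (fun v => L v = l)).card :=
          Finset.card_eq_sum_card_fiberwise hmemI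
      _ ≤ ∑ l ∈ I, k := by
          refine Finset.sum_le_sum (fun l hl => ?_)
          refine le_trans (Finset.card_le_card ?_) (hk x l)
          intro v hv
          rw [Finset.mem_filter] at hv ⊢
          exact ⟨(Finset.mem_filter.1 (hF hv.1)).1, hv.2⟩
      _ ≤ k * p := by
          rw [Finset.sum_const, smul_eq_mul, hI, Nat.card_Ico]
          have : j * p + r0 + 1 - (j * p + r0 + 1 - p) ≤ p := by omega
          exact Nat.mul_le_mul_right k this |>.trans_eq (by ring) |>.trans_eq rfl
  set A₀ : Finset V := U \ S₀ with hA₀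
  by_cases hbig : ∃ j, u < 2 * ((A₀.filter (fun v => band v = j)).card)
  · -- a band with more than half of the vertices : use the centroid lemma inside it
    obtain ⟨j0, hj0⟩ := hbig
    set W : Finset V := A₀.filter (fun v => band v = j0) with hW
    have hWU : W ⊆ U := (Finset.filter_subset _ _).trans Finset.sdiff_subset
    obtain ⟨x0, hx0⟩ := centroid (G := G) hT (fun x => B x ∩ W) W
      (fun x => Finset.inter_subset_right)
      (by
        intro v w hv hw hadj
        obtain ⟨x, hx1, hx2⟩ := hcov hadj
        exact ⟨x, Finset.mem_inter.2 ⟨hx1, hv⟩, Finset.mem_inter.2 ⟨hx2, hw⟩⟩)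
      (by
        intro v hv
        have hset : {x : ι | v ∈ B x ∩ W} = {x : ι | v ∈ B x} := by
          ext x; simp [Finset.mem_inter, hv]
        rw [hset]
        exact hconn v)
    set X : Finset V := B x0 ∩ W with hX
    have hXW : X ⊆ W := Finset.inter_subset_right
    have hXcard : X.card ≤ k * p := by
      refine hbagband x0 j0 X ?_
      intro v hv
      rw [hX, Finset.mem_inter] at hv
      rw [Finset.mem_filter]
      exact ⟨hv.1, (Finset.mem_filter.1 hv.2).2⟩
    refine ⟨S₀ ∪ X, Finset.union_subset (Finset.filter_subset _ _) (hXW.trans hWU), ?_, ?_⟩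
    · exact le_trans (Finset.card_union_le _ _) (Nat.add_le_add hS₀card hXcard)
    · intro v
      set S : Finset V := S₀ ∪ X with hS
      by_cases hvA : v ∈ U \ S
      · have hS₀S : S₀ ⊆ S := Finset.subset_union_left
        have hsub2 : ∀ z ∈ compIn (G := G) (U \ S) v, z ∈ A₀ ∧ band z = band v := by
          intro z hz
          rw [mem_compIn] at hz
          constructor
          · rw [hA₀, Finset.mem_sdiff]
            have := Finset.mem_sdiff.1 hz.1
            exact ⟨this.1, fun hh => this.2 (hS₀S hh)⟩
          · exact hcompband S hS₀S v z hz.2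
        by_cases hbv : band v = j0
        · -- inside the big band : use the centroid bound
          have hDW : ∀ z ∈ compIn (G := G) (U \ S) v, z ∈ W \ X := by
            intro z hz
            obtain ⟨hz1, hz2⟩ := hsub2 z hz
            have hzW : z ∈ W := by
              rw [hW, Finset.mem_filter]
              exact ⟨hz1, by rw [hz2, hbv]⟩
            have hzX : z ∉ X := by
              intro hh
              have := (Finset.mem_sdiff.1 (mem_compIn.1 hz).1).2
              exact this (Finset.mem_union_right _ hh)
            exact Finset.mem_sdiff.2 ⟨hzW, hzX⟩
          have hDsub : compIn (G := G) (U \ S) v ⊆ compIn (G := G) (W \ X) v := by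
            intro z hz
            have h1 := (mem_compIn.1 hz).2
            have h2 : RIn G (W \ X) v z := by
              refine h1.transfer ?_
              intro t ht
              refine hDW t (mem_compIn.2 ⟨?_, ht⟩)
              rcases ht.mem_right with rfl | htA
              · exact hvA
              · exact htA
            exact mem_compIn.2 ⟨hDW z hz, h2⟩
          have h3 := hx0 v
          have h4 := Finset.card_le_card hDsub
          have h5 : W.card ≤ u := by rw [hu]; exact Finset.card_le_card hWU
          omega
        · -- in a small band
          have hDsub : compIn (G := G) (U \ S) v ⊆ A₀.filter (fun w => band w = band v) := by
            intro z hz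
            obtain ⟨hz1, hz2⟩ := hsub2 z hz
            exact Finset.mem_filter.2 ⟨hz1, hz2⟩
          have hdisj : Disjoint (A₀.filter (fun w => band w = band v)) W := by
            rw [hW, Finset.disjoint_left]
            intro z hz hz'
            rw [Finset.mem_filter] at hz hz'
            exact hbv (hz.2 ▸ hz'.2)
          have hsum2 : (A₀.filter (fun w => band w = band v)).card + W.card ≤ u := by
            rw [← Finset.card_union_of_disjoint hdisj, hu]
            exact Finset.card_le_card (Finset.union_subset
              ((Finset.filter_subset _ _).trans Finset.sdiff_subset) hWU)
          have h4 := Finset.card_le_card hDsub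
          omega
      · -- v outside : empty component
        have : compIn (G := G) (U \ S) v = ∅ := by
          rw [Finset.eq_empty_iff_forall_notMem]
          intro z hz
          rw [mem_compIn] at hz
          rcases hz.2.symm.mem_right with rfl | hh
          · exact hvA hz.1
          · exact hvA hh
        rw [this]
        simp
  · -- no big band : S₀ alone works
    push_neg at hbig
    refine ⟨S₀, Finset.filter_subset _ _, le_trans hS₀card (Nat.le_add_right _ _), ?_⟩
    intro v
    have hDsub : compIn (G := G) (U \ S₀) v ⊆ A₀.filter (fun w => band w = band v) := by
      intro z hz
      rw [mem_compIn] at hz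
      refine Finset.mem_filter.2 ⟨by rw [hA₀]; exact hz.1, ?_⟩
      exact hcompband S₀ (le_refl _) v z hz.2
    have h4 := Finset.card_le_card hDsub
    have h5 := hbig (band v)
    omega


/-! ### numeric helpers -/

lemma sqrt2_ge : (1.41 : ℝ) ≤ Real.sqrt 2 := by
  rw [show (2:ℝ) = 1.41^2 + 0.0119 by norm_num]
  nlinarith [Real.sq_sqrt (show (0:ℝ) ≤ 1.41^2 + 0.0119 by norm_num),
    Real.sqrt_nonneg (1.41^2 + 0.0119)]

/-! ### the main recursion -/

theorem main_rec {ι : Type} {T : SimpleGraph ι} {B : ι → Finset V} {L : V → ℕ} {k : ℕ}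
    (hT : T.IsTree)
    (hcov : ∀ ⦃v w⦄, G.Adj v w → ∃ x, v ∈ B x ∧ w ∈ B x)
    (hconn : ∀ v : V, (T.induce {x | v ∈ B x}).Connected)
    (hlay : ∀ ⦃v w⦄, G.Adj v w → L v ≤ L w + 1 ∧ L w ≤ L v + 1)
    (hk : ∀ x i, ((B x).filter (fun v => L v = i)).card ≤ k)
    (hkpos : 1 ≤ k) :
    ∀ (n : ℕ) (U : Finset V), U.card ≤ n →
      ∃ l, Deco G U l ∧ ∀ b ∈ l, ((b.card : ℝ) ≤ 11 * Real.sqrt (k * U.card)) := by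
  intro n
  induction n with
  | zero =>
      intro U hU
      refine ⟨[U], deco_single (G := G) U, ?_⟩
      intro b hb
      rw [List.mem_singleton] at hb
      subst hb
      rw [Nat.le_zero.1 hU]
      push_cast
      positivity
  | succ n ih =>
      intro U hU
      set u := U.card with hu
      have hsqrtnn : (0:ℝ) ≤ Real.sqrt (k * u) := Real.sqrt_nonneg _
      by_cases hsmall : u ≤ 64 * k
      · -- base case : one bag
        refine ⟨[U], deco_single (G := G) U, ?_⟩
        intro b hb
        rw [List.mem_singleton] at hb
        subst hb
        -- u ≤ 8 √(k u) ≤ 11 √(k u)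
        have h1 : (u:ℝ) ≤ Real.sqrt (64 * ((k:ℝ) * u)) := by
          rw [Real.le_sqrt (by positivity) (by positivity)]
          have : ((u:ℝ)) ≤ 64 * k := by exact_mod_cast hsmall
          nlinarith [Nat.cast_nonneg (α := ℝ) u]
        have h2 : Real.sqrt (64 * ((k:ℝ) * u)) = 8 * Real.sqrt ((k:ℝ) * u) := by
          rw [Real.sqrt_mul (by norm_num)]
          rw [show (64:ℝ) = 8^2 by norm_num, Real.sqrt_sq (by norm_num)]
        calc ((u : ℝ)) ≤ Real.sqrt (64 * ((k:ℝ) * u)) := h1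
          _ = 8 * Real.sqrt ((k:ℝ) * u) := h2
          _ ≤ 11 * Real.sqrt ((k:ℝ) * u) := by nlinarith
      · -- recursive case
        push_neg at hsmall
        have hupos : 0 < u := by omega
        set m : ℕ := u / k with hm
        have hm64 : 64 ≤ m := by
          rw [hm, Nat.le_div_iff_mul_le (by omega)]
          omega
        set p : ℕ := Nat.sqrt m with hp
        have hp8 : 8 ≤ p := by
          rw [hp]
          rw [Nat.le_sqrt]
          omega
        have hppos : 0 < p := by omega
        -- real bounds on p
        have hkR : (1:ℝ) ≤ (k:ℝ) := by exact_mod_cast hkpos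
        have huR : (64:ℝ) * k < u := by exact_mod_cast hsmall
        have hmR : ((m:ℝ)) ≤ (u:ℝ) / k := by
          rw [hm]; exact Nat.cast_div_le
        have hmR2 : (u:ℝ)/k - 1 ≤ (m:ℝ) := by
          have hdm := Nat.div_add_mod u k
          have hmod : u % k < k := Nat.mod_lt _ (by omega)
          have : ((k:ℝ)) * m + (u % k : ℕ) = u := by exact_mod_cast hdm
          have hkpos' : (0:ℝ) < k := by linarith
          rw [div_sub_one (by linarith), div_le_iff₀ hkpos']
          push_cast
          nlinarith [(Nat.cast_le (α := ℝ)).2 hmod.le]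
        have hmuk : (63/64 : ℝ) * ((u:ℝ)/k) ≤ (m:ℝ) := by
          have h64 : (64:ℝ) ≤ (u:ℝ)/k := by
            rw [le_div_iff₀ (by linarith)]
            linarith
          nlinarith
        -- p ≥ (441/512) √(u/k)
        have hplb : (441/512 : ℝ) * Real.sqrt ((u:ℝ)/k) ≤ (p:ℝ) := by
          have h1 : ((m:ℝ)) < ((p:ℝ) + 1)^2 := by
            have := Nat.lt_succ_sqrt m
            rw [← hp] at this
            have : (m:ℝ) < ((p+1 : ℕ):ℝ) * ((p+1:ℕ):ℝ) := by exact_mod_cast this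
            push_cast at this
            nlinarith
          have h2 : Real.sqrt ((m:ℝ)) ≤ (p:ℝ) + 1 := by
            rw [show ((p:ℝ)+1) = Real.sqrt (((p:ℝ)+1)^2) by
              rw [Real.sqrt_sq (by positivity)]]
            exact Real.sqrt_le_sqrt h1.le
          have h8 : (8:ℝ) ≤ Real.sqrt ((m:ℝ)) := by
            rw [show (8:ℝ) = Real.sqrt 64 by
              rw [show (64:ℝ) = 8^2 by norm_num, Real.sqrt_sq (by norm_num)]]
            exact Real.sqrt_le_sqrt (by exact_mod_cast hm64)
          have h3 : (7/8 : ℝ) * Real.sqrt ((m:ℝ)) ≤ (p:ℝ) := by nlinarith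
          have h4 : Real.sqrt ((63/64 : ℝ)) * Real.sqrt ((u:ℝ)/k) ≤ Real.sqrt ((m:ℝ)) := by
            rw [← Real.sqrt_mul (by norm_num)]
            exact Real.sqrt_le_sqrt hmuk
          have h5 : (63/64 : ℝ) ≤ Real.sqrt ((63/64 : ℝ)) := by
            rw [Real.le_sqrt (by norm_num) (by norm_num)]
            norm_num
          have h6 : (63/64 : ℝ) * Real.sqrt ((u:ℝ)/k) ≤ Real.sqrt ((m:ℝ)) := by
            have := Real.sqrt_nonneg ((u:ℝ)/k)
            nlinarith
          nlinarith [Real.sqrt_nonneg ((u:ℝ)/k)]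
        -- √(ku) · √(u/k) = u
        have hprod : Real.sqrt ((k:ℝ) * u) * Real.sqrt ((u:ℝ)/k) = (u:ℝ) := by
          rw [← Real.sqrt_mul (by positivity)]
          rw [show ((k:ℝ) * u) * ((u:ℝ)/k) = (u:ℝ)^2 by field_simp]
          exact Real.sqrt_sq (by positivity)
        have hsqukpos : (0:ℝ) < Real.sqrt ((u:ℝ)/k) := by
          apply Real.sqrt_pos.2
          positivity
        -- (u : ℝ)/p ≤ (512/441) √(ku)
        have hup : ((u:ℝ))/p ≤ (512/441 : ℝ) * Real.sqrt ((k:ℝ)*u) := by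
          have hppos' : (0:ℝ) < p := by exact_mod_cast hppos
          rw [div_le_iff₀ hppos']
          have h1 : (441/512 : ℝ) * Real.sqrt ((u:ℝ)/k) ≤ (p:ℝ) := hplb
          have h2 : (0:ℝ) ≤ Real.sqrt ((k:ℝ)*u) := Real.sqrt_nonneg _
          nlinarith
        -- (k*p : ℝ) ≤ √(ku)
        have hkp : ((k:ℝ)) * p ≤ Real.sqrt ((k:ℝ)*u) := by
          have h1 : ((p:ℝ)) ≤ Real.sqrt ((m:ℝ)) := by
            rw [Real.le_sqrt (by positivity) (by positivity)]
            exact_mod_cast Nat.sqrt_le' m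
          have h2 : Real.sqrt ((m:ℝ)) ≤ Real.sqrt ((u:ℝ)/k) := Real.sqrt_le_sqrt hmR
          have h3 : ((k:ℝ)) * Real.sqrt ((u:ℝ)/k) = Real.sqrt ((k:ℝ)*u) := by
            rw [show ((k:ℝ)*u) = (k:ℝ)^2 * ((u:ℝ)/k) by field_simp]
            rw [Real.sqrt_mul (by positivity), Real.sqrt_sq (by positivity)]
          nlinarith
        -- apply the separator
        obtain ⟨S, hSU, hScard, hScomp⟩ := separator (G := G) hT hcov hconn hlay hk U hppos
        rw [← hu] at hScard hScomp
        have hScardR : ((S.card : ℝ)) ≤ (512/441 : ℝ) * Real.sqrt ((k:ℝ)*u) +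
            Real.sqrt ((k:ℝ)*u) := by
          have h1 : ((S.card : ℝ)) ≤ ((u/p : ℕ) : ℝ) + ((k*p : ℕ) : ℝ) := by
            exact_mod_cast hScard
          have h2 : ((u/p : ℕ) : ℝ) ≤ (u:ℝ)/p := Nat.cast_div_le
          have h3 : ((k*p : ℕ) : ℝ) = (k:ℝ)*p := by push_cast; ring
          nlinarith
        -- recursive decompositions of the components
        set cc : ℝ := 11 * (Real.sqrt ((k:ℝ)*u) / Real.sqrt 2) with hcc
        have hIH : ∀ v ∈ U \ S, ∃ l, Deco G (compIn (G := G) (U \ S) v) l ∧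
            ∀ b ∈ l, ((b.card : ℝ) ≤ cc) := by
          intro v hv
          have hcard2 := hScomp v
          have hcardn : (compIn (G := G) (U \ S) v).card ≤ n := by omega
          obtain ⟨l, hl, hlb⟩ := ih _ hcardn
          refine ⟨l, hl, ?_⟩
          intro b hb
          refine le_trans (hlb b hb) ?_
          rw [hcc]
          have h1 : ((compIn (G := G) (U \ S) v).card : ℝ) ≤ (u:ℝ)/2 := by
            have : ((2:ℝ)) * (compIn (G := G) (U \ S) v).card ≤ (u:ℝ) := by
              exact_mod_cast hcard2
            linarith
          have h2 : Real.sqrt ((k:ℝ) * (compIn (G := G) (U \ S) v).card) ≤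
              Real.sqrt ((k:ℝ) * u / 2) := by
            apply Real.sqrt_le_sqrt
            rw [mul_div_assoc]
            have : (0:ℝ) ≤ k := by positivity
            nlinarith
          have h3 : Real.sqrt ((k:ℝ) * u / 2) = Real.sqrt ((k:ℝ)*u) / Real.sqrt 2 :=
            Real.sqrt_div' _ (by norm_num)
          rw [h3] at h2
          nlinarith
        obtain ⟨l, hl, hlb⟩ := deco_of_components (G := G) cc hIH
        have hdisj : Disjoint S (U \ S) := Finset.disjoint_sdiff
        have hdeco := deco_addSet (G := G) S hl hdisj
        have hUeq : (U \ S) ∪ S = U := by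
          rw [Finset.sdiff_union_of_subset hSU]
        rw [hUeq] at hdeco
        refine ⟨S :: l.map (· ∪ S), hdeco, ?_⟩
        -- size bound for all bags
        have hfinal : ((S.card : ℝ)) + cc ≤ 11 * Real.sqrt ((k:ℝ)*u) := by
          rw [hcc]
          have h2 : (1.41:ℝ) ≤ Real.sqrt 2 := sqrt2_ge
          have hdivle : Real.sqrt ((k:ℝ)*u) / Real.sqrt 2 ≤
              Real.sqrt ((k:ℝ)*u) / 1.41 :=
            div_le_div_of_nonneg_left hsqrtnn (by norm_num) h2
          have h3 : 11 * (Real.sqrt ((k:ℝ)*u) / Real.sqrt 2) ≤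
              11 * (Real.sqrt ((k:ℝ)*u) / 1.41) :=
            mul_le_mul_of_nonneg_left hdivle (by norm_num)
          have h4 : 11 * (Real.sqrt ((k:ℝ)*u) / 1.41) = (11/1.41) * Real.sqrt ((k:ℝ)*u) := by
            ring
          nlinarith [hsqrtnn, hScardR, h3]
        intro b hb
        rcases List.mem_cons.1 hb with rfl | hb
        · have : (0:ℝ) ≤ cc := by
            rw [hcc]; positivity
          push_cast
          nlinarith
        · obtain ⟨b', hb', rfl⟩ := List.mem_map.1 hb
          have h1 : ((b' ∪ S).card : ℝ) ≤ (b'.card : ℝ) + S.card := by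
            exact_mod_cast Finset.card_union_le b' S
          have h2 := hlb b' hb'
          push_cast
          nlinarith [hfinal]


/-- convert a decomposition of `univ` into a pathwidth bound -/
lemma pathwidth_le_of_deco [Fintype V] {G : SimpleGraph V} {l : List (Finset V)} {M : ℕ}
    (hd : Deco G Finset.univ l) (hM : ∀ b ∈ l, b.card ≤ M) :
    pathwidth G ≤ M - 1 := by
  obtain ⟨hsub, hmem, hcov, hint⟩ := hd
  apply Nat.sInf_le
  refine ⟨l.length, fun i => l.get i, ?_, ?_, ?_, ?_⟩
  · intro v w hadj
    obtain ⟨b, hb, hvb, hwb⟩ := hcov (Finset.mem_univ v) (Finset.mem_univ w) hadj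
    obtain ⟨i, hi, rfl⟩ := List.mem_iff_getElem.1 hb
    exact ⟨⟨i, hi⟩, hvb, hwb⟩
  · intro v
    obtain ⟨b, hb, hvb⟩ := hmem v (Finset.mem_univ v)
    obtain ⟨i, hi, rfl⟩ := List.mem_iff_getElem.1 hb
    exact ⟨⟨i, hi⟩, hvb⟩
  · intro v x y z hxy hyz hvx hvz
    exact hint v x.1 y.1 z.1 x.2 y.2 z.2 hxy hyz hvx hvz
  · intro x
    have := hM (l.get x) (List.get_mem l x)
    show (l.get x).card ≤ M - 1 + 1
    omega

end PWaux

/-- Every `n`-vertex graph with layered treewidth `k` has pathwidth at most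
`11√(kn) − 1`. -/
theorem pathwidth_of_layeredTreewidth {V : Type} [Fintype V] [Nonempty V]
    (G : SimpleGraph V) (k : ℕ) (h : layeredTreewidth G = k) :
    (pathwidth G : ℝ) ≤ 11 * Real.sqrt (k * Fintype.card V) - 1 := by
  classical
  have hn1 : 1 ≤ Fintype.card V := Fintype.card_pos
  set n := Fintype.card V with hnn
  set SS : Set ℕ := {k | ∃ (ι : Type) (T : SimpleGraph ι) (B : ι → Finset V) (L : V → ℕ),
    IsTreeDecomp G T B ∧ IsLayering G L ∧
    ∀ x i, ((B x).filter (fun v => L v = i)).card ≤ k} with hSS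
  have hSSne : SS.Nonempty := by
    refine ⟨n, Unit, ⊥, fun _ => Finset.univ, fun _ => 0, ⟨?_, ?_, ?_⟩, ?_, ?_⟩
    · constructor
      · rw [SimpleGraph.connected_iff]
        exact ⟨fun a b => by cases a; cases b; exact SimpleGraph.Reachable.refl _, ⟨()⟩⟩
      · intro v c hc
        cases c with
        | nil => exact hc.ne_nil rfl
        | cons h p => exact h.elim
    · intro v w hadj
      exact ⟨(), Finset.mem_univ _, Finset.mem_univ _⟩
    · intro v
      rw [SimpleGraph.connected_iff]
      constructor
      · intro a b
        have : a = b := Subsingleton.elim a b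
        subst this
        exact SimpleGraph.Reachable.refl _
      · exact ⟨⟨(), Finset.mem_univ _⟩⟩
    · intro v w _
      simp
    · intro x i
      exact le_trans (Finset.card_filter_le _ _) (le_of_eq (Finset.card_univ))
  have hmem : k ∈ SS := by
    rw [← h]
    exact Nat.sInf_mem hSSne
  obtain ⟨ι, T, B, L, ⟨hT, hcov, hconn⟩, hlay, hk⟩ := hmem
  have hkpos : 1 ≤ k := by
    by_contra hk0
    push_neg at hk0
    interval_cases k
    obtain ⟨v⟩ := (inferInstance : Nonempty V)
    obtain ⟨⟨x, hx⟩⟩ := (hconn v).nonempty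
    have h1 : v ∈ (B x).filter (fun w => L w = L v) := by
      rw [Finset.mem_filter]
      exact ⟨hx, rfl⟩
    have h2 := hk x (L v)
    have h3 : 0 < ((B x).filter (fun w => L w = L v)).card :=
      Finset.card_pos.2 ⟨v, h1⟩
    omega
  obtain ⟨l, hdeco, hbags⟩ := PWaux.main_rec (G := G) hT hcov hconn hlay hk hkpos n
    Finset.univ (le_of_eq (Finset.card_univ))
  rw [Finset.card_univ, ← hnn] at hbags
  set c : ℝ := 11 * Real.sqrt (k * n) with hc
  have hcnn : (0:ℝ) ≤ c := by rw [hc]; positivity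
  have hc1 : (11:ℝ) ≤ c := by
    rw [hc]
    have h1 : (1:ℝ) ≤ Real.sqrt (k * n) := by
      rw [show (1:ℝ) = Real.sqrt 1 by rw [Real.sqrt_one]]
      apply Real.sqrt_le_sqrt
      have : 1 ≤ k * n := Nat.one_le_iff_ne_zero.2 (by positivity)
      exact_mod_cast this
    nlinarith
  set M : ℕ := ⌊c⌋₊ with hM
  have hbagsM : ∀ b ∈ l, b.card ≤ M := by
    intro b hb
    rw [hM]
    exact Nat.le_floor (hbags b hb)
  have hpw := PWaux.pathwidth_le_of_deco hdeco hbagsM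
  have hM1 : 1 ≤ M := by
    have h11 : (11:ℕ) ≤ M := by
      rw [hM]
      exact Nat.le_floor (by exact_mod_cast hc1)
    omega
  have hcast : ((pathwidth G : ℝ)) ≤ ((M - 1 : ℕ) : ℝ) := by exact_mod_cast hpw
  have hMc : ((M:ℝ)) ≤ c := Nat.floor_le hcnn
  have hfin : (((M - 1 : ℕ)) : ℝ) = (M:ℝ) - 1 := by
    push_cast [Nat.cast_sub hM1]
    ring
  rw [hfin] at hcast
  linarith
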